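/- Let V be a rooted directed tree with root v0 and μ=(μ_v)_{v∈V} a weight of nonzero scalars such that ∑_{u∈Chi(v)}|μ_u|^{-1}<∞ for all v∈V (i.e., the unweighted backward shift B is defined on ℓ^∞(V,μ), equivalently on c_0(V,μ)). Let 𝒥 be the set of all backward invariant sequences f on V with f(v0)=1. Then: (a) inf_{f∈𝒥} sup_{v∈V}|f(v)μ_v| = r_∞(V,μ) and inf_{f∈𝒥} sup_{v∈V,v≠v0}|f(v)μ_v| = c_∞(V,μ). (b) If r_∞(V,μ)<∞ (equivalently c_∞(V,μ)<∞), then there exists a backward invariant sequence f∈ℓ^∞(V,μ) with f(v0)=1 attaining both infima; one such f is given, for v=v_n∈gen_n with path (v0,v1,…,v_n) from v0 to v_n, by f(v)=∏_{k=1}^n [r_∞(V(v_k),μ)^{-1} / ∑_{u∈Chi(par(v_k))} r_∞(V(u),μ)^{-1}] > 0 if r_∞(V(v),μ)<∞, and f(v)=0 if r_∞(V(v),μ)=∞. -/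

import Mathlib

open scoped ENNReal NNReal Topology Classical
open Filter

namespace PaperTree

/-! ### Directed trees -/

variable {V : Type*}

/-- Iterated parent map of a directed tree given by a parent function. -/
def parIter (par : V → Option V) : ℕ → V → Option V
  | 0, v => some v
  | n + 1, v => (par v).bind (parIter par n)

/-- `par` is the parent function of a (countable, connected, acyclic) directed tree on `V`,
in which every vertex has at most one parent and at most one vertex (the root) has none. -/
structure IsDirectedTree (par : V → Option V) : Prop where
  countable : Countable V
  acyclic : ∀ (v : V) (n : ℕ), 0 < n → parIter par n v ≠ some v
  connected : ∀ u v : V, ∃ (m n : ℕ) (w : V), parIter par m u = some w ∧ parIter par n v = some w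
  root_unique : ∀ u v : V, par u = none → par v = none → u = v

/-- The set of children of `v`. -/
def children (par : V → Option V) (v : V) : Set V := {u : V | par u = some v}

/-- The set of descendants of `v` (including `v`); the rooted subtree `V(v)`. -/
def descendants (par : V → Option V) (v : V) : Set V := {u : V | ∃ n : ℕ, parIter par n u = some v}

def IsLeafV (par : V → Option V) (v : V) : Prop := children par v = ∅

def Leafless (par : V → Option V) : Prop := ∀ v : V, children par v ≠ ∅

def IsRoot (par : V → Option V) (v : V) : Prop := par v = none

def Rooted (par : V → Option V) : Prop := ∃ v : V, IsRoot par v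

def Unrooted (par : V → Option V) : Prop := ∀ v : V, par v ≠ none

/-- The tree has a free left end: some vertex all of whose (proper) ancestors
have exactly one child. -/
def HasFreeLeftEnd (par : V → Option V) : Prop :=
  ∃ v : V, ∀ n : ℕ, 1 ≤ n → ∀ w : V, parIter par n v = some w → ∃! u : V, u ∈ children par w

/-- The tree has finite length (all branches have uniformly bounded length). -/
def FiniteLength (par : V → Option V) : Prop := ∃ m : ℕ, ∀ u : V, parIter par (m + 1) u = none

/-- Product of the weights along the upward path of length `n` ending at `u`;
for `u ∈ Chi^n(v)` this is `λ(v → u)`, and `pathProd par lam n v = λ(par^n(v) → v)`. -/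
def pathProd {𝕜 : Type*} [Monoid 𝕜] (par : V → Option V) (lam : V → 𝕜) : ℕ → V → 𝕜
  | 0, _ => 1
  | n + 1, u => lam u * ((par u).elim 1 (pathProd par lam n))

/-- A (finite or infinite, maximal) branch starting at `v`, encoded with `Option`. -/
def IsOptBranch (par : V → Option V) (v : V) (b : ℕ → Option V) : Prop :=
  b 0 = some v ∧
  (∀ (k : ℕ) (w : V), b k = some w →
      (children par w = ∅ ∧ b (k + 1) = none) ∨ ∃ u ∈ children par w, b (k + 1) = some u) ∧
  ∀ k : ℕ, b k = none → b (k + 1) = none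

/-- An infinite branch starting at `v` (adequate for leafless trees). -/
def IsBranch (par : V → Option V) (v : V) (b : ℕ → V) : Prop :=
  b 0 = v ∧ ∀ k : ℕ, b (k + 1) ∈ children par (b k)

/-- The `[0,∞]`-valued absolute weight associated with a scalar weight. -/
noncomputable def nw {𝕜 : Type*} [RCLike 𝕜] (μ : V → 𝕜) : V → ℝ≥0∞ := fun v => (‖μ v‖₊ : ℝ≥0∞)

/-! ### Fixed points over subtrees and backward invariant sequences -/

section Invariance

variable {𝕜 : Type*} [RCLike 𝕜] {V : Type*}

/-- The restriction of `g` to the subtree `W` is a fixed point of the weighted backward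
shift over `W`: `g w = ∑_{u ∈ Chi(w) ∩ W} λ_u g u` (unconditionally) for every `w ∈ W`. -/
def FixedPtOver (par : V → Option V) (lam : V → 𝕜) (g : V → 𝕜) (W : Set V) : Prop :=
  ∀ w ∈ W, HasSum (fun u : ↥(children par w ∩ W) => lam u.1 * g u.1) (g w)

/-- `g` is backward invariant with respect to the children map `chi`:
`g v = ∑_{u ∈ chi v} g u` (unconditionally) for every non-leaf `v`. -/
def BackwardInv (chi : V → Set V) (g : V → 𝕜) : Prop :=
  ∀ v : V, chi v ≠ ∅ → HasSum (fun u : ↥(chi v) => g u.1) (g v)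

/-- Backward invariance over a subtree `W` (with respect to the children map `chi`). -/
def BackwardInvOn (chi : V → Set V) (W : Set V) (g : V → 𝕜) : Prop :=
  ∀ w ∈ W, (chi w ∩ W).Nonempty → HasSum (fun u : ↥(chi w ∩ W) => g u.1) (g w)

/-- A scalar that is a (strictly) positive real. -/
def IsPosScalar {𝕜 : Type*} [RCLike 𝕜] (c : 𝕜) : Prop := ∃ r : ℝ, 0 < r ∧ c = (r : 𝕜)

end Invariance

/-! ### The generalized continued fractions `c_p` and resistances `r_p` -/

section Constants

/-- Conjugate exponent. -/
noncomputable def conjExp (p : ℝ) : ℝ := p / (p - 1)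

variable {V : Type*}

/-- `cpAux chi w p m v` is the continued fraction `c_p` of the subtree of descendants of `v`
(with respect to the children map `chi`) truncated at depth `m`, with weight `w`. -/
noncomputable def cpAux (chi : V → Set V) (w : V → ℝ≥0∞) (p : ℝ) : ℕ → V → ℝ≥0∞
  | 0, _ => 0
  | m + 1, v =>
      if chi v = ∅ then 0
      else (∑' u : ↥(chi v),
              (w u.1 ^ p + cpAux chi w p m u.1 ^ p) ^ (-(conjExp p / p))) ^ (-(1 / conjExp p))

/-- The continued fraction `c_p(V(v), w)` of order `1 < p < ∞`. -/
noncomputable def cpC (chi : V → Set V) (w : V → ℝ≥0∞) (p : ℝ) (v : V) : ℝ≥0∞ :=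
  ⨆ m : ℕ, cpAux chi w p m v

/-- The resistance `r_p(V(v), w)` of order `1 < p < ∞`. -/
noncomputable def rpC (chi : V → Set V) (w : V → ℝ≥0∞) (p : ℝ) (v : V) : ℝ≥0∞ :=
  (w v ^ p + cpC chi w p v ^ p) ^ (1 / p)

/-- Truncated continued fraction of order `p = ∞`. -/
noncomputable def cInfAux (chi : V → Set V) (w : V → ℝ≥0∞) : ℕ → V → ℝ≥0∞
  | 0, _ => 0
  | m + 1, v =>
      if chi v = ∅ then 0
      else (∑' u : ↥(chi v), (max (w u.1) (cInfAux chi w m u.1))⁻¹)⁻¹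

/-- The continued fraction `c_∞(V(v), w)`. -/
noncomputable def cInfC (chi : V → Set V) (w : V → ℝ≥0∞) (v : V) : ℝ≥0∞ :=
  ⨆ m : ℕ, cInfAux chi w m v

/-- The resistance `r_∞(V(v), w)`. -/
noncomputable def rInfC (chi : V → Set V) (w : V → ℝ≥0∞) (v : V) : ℝ≥0∞ :=
  max (w v) (cInfC chi w v)

end Constants

/-! ### Weighted `ℓ^p`- and sup-norms on subsets of vertices -/

section Norms

variable {𝕜 : Type*} [RCLike 𝕜] {V : Type*}

/-- `(∑_{v ∈ S} (|g v| w v)^p)^{1/p}` in `[0,∞]`. -/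
noncomputable def lpSumOn (w : V → ℝ≥0∞) (p : ℝ) (S : Set V) (g : V → 𝕜) : ℝ≥0∞ :=
  (∑' v : ↥S, ((‖g v.1‖₊ : ℝ≥0∞) * w v.1) ^ p) ^ (1 / p)

/-- `sup_{v ∈ S} |g v| w v` in `[0,∞]`. -/
noncomputable def supNormOn (w : V → ℝ≥0∞) (S : Set V) (g : V → 𝕜) : ℝ≥0∞ :=
  ⨆ v : ↥S, (‖g v.1‖₊ : ℝ≥0∞) * w v.1

end Norms

/-! ### Auxiliary lemmas -/

section Aux

variable {V : Type*}

theorem parIter_add' (par : V → Option V) (m n : ℕ) (v : V) :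
    parIter par (m + n) v = (parIter par m v).bind (parIter par n) := by
  induction m generalizing v with
  | zero => simp [parIter]
  | succ m ih =>
      have h : m + 1 + n = (m + n) + 1 := by omega
      rw [h]
      show (par v).bind (parIter par (m + n)) = ((par v).bind (parIter par m)).bind (parIter par n)
      cases par v with
      | none => rfl
      | some p => simpa using ih p

theorem tsum_iInf_antitone {ι : Type*} (f : ℕ → ι → ℝ≥0∞)
    (hf : ∀ i, Antitone fun n => f n i) (h0 : ∑' i, f 0 i ≠ ⊤) :
    ⨅ n, ∑' i, f n i = ∑' i, ⨅ n, f n i := by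
  letI : MeasurableSpace ι := ⊤
  haveI : MeasurableSingletonClass ι := ⟨fun _ => trivial⟩
  have hmeas : ∀ n, Measurable (f n) := fun n => measurable_from_top
  have hanti : Antitone f := fun m n h i => hf i h
  have h := MeasureTheory.lintegral_iInf hmeas hanti (by rwa [MeasureTheory.lintegral_count])
  rw [MeasureTheory.lintegral_count] at h
  rw [h]
  simp_rw [MeasureTheory.lintegral_count]

variable (par : V → Option V) (root : V)

theorem parIter_root_none (hroot : IsRoot par root) (n : ℕ) :
    parIter par (n + 1) root = none := by
  show (par root).bind (parIter par n) = none
  rw [hroot]; rfl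

theorem reaches_root (hTree : IsDirectedTree par) (hroot : IsRoot par root) (v : V) :
    ∃ n : ℕ, parIter par n v = some root := by
  obtain ⟨m, n, w, hm, hn⟩ := hTree.connected v root
  rcases n with _ | n
  · obtain rfl : root = w := by simpa [parIter] using hn
    exact ⟨m, hm⟩
  · rw [parIter_root_none par root hroot] at hn; exact absurd hn (by simp)

theorem depth_unique (hroot : IsRoot par root) {m n : ℕ} {v : V}
    (hm : parIter par m v = some root) (hn : parIter par n v = some root) : m = n := by
  wlog hmn : m ≤ n generalizing m n
  · exact (this hn hm (by omega)).symm
  by_contra hne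
  obtain ⟨k, rfl⟩ : ∃ k, n = m + (k + 1) := ⟨n - m - 1, by omega⟩
  rw [parIter_add', hm] at hn
  simp only [Option.bind_some] at hn
  rw [parIter_root_none par root hroot] at hn
  exact absurd hn (by simp)

/-- The depth of a vertex below the root. -/
noncomputable def depthV (v : V) : ℕ := sInf {n : ℕ | parIter par n v = some root}

theorem depthV_spec (hTree : IsDirectedTree par) (hroot : IsRoot par root) (v : V) :
    parIter par (depthV par root v) v = some root :=
  Nat.sInf_mem (reaches_root par root hTree hroot v)

theorem depthV_root (hTree : IsDirectedTree par) (hroot : IsRoot par root) :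
    depthV par root root = 0 :=
  depth_unique par root hroot (depthV_spec par root hTree hroot root) (by simp [parIter])

theorem depthV_child (hTree : IsDirectedTree par) (hroot : IsRoot par root) {v p : V}
    (h : par v = some p) : depthV par root v = depthV par root p + 1 := by
  refine depth_unique par root hroot (depthV_spec par root hTree hroot v) ?_
  have : parIter par (depthV par root p + 1) v
      = (par v).bind (parIter par (depthV par root p)) := by
    have h1 : depthV par root p + 1 = 1 + depthV par root p := by omega
    rw [h1, parIter_add']
    simp [parIter]
  rw [this, h, Option.bind_some]
  exact depthV_spec par root hTree hroot p

theorem has_parent_of_ne_root (hTree : IsDirectedTree par) (hroot : IsRoot par root) {v : V}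
    (hv : v ≠ root) : ∃ p : V, par v = some p := by
  cases h : par v with
  | none => exact absurd (hTree.root_unique v root h hroot) hv
  | some p => exact ⟨p, rfl⟩

theorem child_ne_root (hroot : IsRoot par root) {v p : V} (h : par v = some p) : v ≠ root := by
  rintro rfl; rw [hroot] at h; exact absurd h (by simp)

/-- Strong induction along depth. -/
theorem depth_induction (hTree : IsDirectedTree par) (hroot : IsRoot par root)
    (P : V → Prop) (h0 : P root)
    (hstep : ∀ v p : V, par v = some p → P p → P v) (v : V) : P v := by
  obtain ⟨n, hn⟩ := reaches_root par root hTree hroot v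
  induction n generalizing v with
  | zero =>
      obtain rfl : v = root := by simpa [parIter] using hn
      exact h0
  | succ n ih =>
      have hn' : (par v).bind (parIter par n) = some root := hn
      cases hp : par v with
      | none => rw [hp] at hn'; exact absurd hn' (by simp)
      | some p =>
          rw [hp] at hn'
          exact hstep v p hp (ih p hn')

end Aux

section CInf

variable {V : Type*} (chi : V → Set V) (w : V → ℝ≥0∞)

theorem cInfAux_mono_succ : ∀ (m : ℕ) (v : V), cInfAux chi w m v ≤ cInfAux chi w (m + 1) v := by
  intro m
  induction m with
  | zero => intro v; simp [cInfAux]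
  | succ m ih =>
      intro v
      show cInfAux chi w (m + 1) v ≤ cInfAux chi w (m + 2) v
      simp only [cInfAux]
      split
      · exact le_rfl
      · refine ENNReal.inv_le_inv.mpr (ENNReal.tsum_le_tsum fun u => ?_)
        exact ENNReal.inv_le_inv.mpr (max_le_max le_rfl (ih u.1))

theorem cInfAux_mono (v : V) : Monotone fun m => cInfAux chi w m v :=
  monotone_nat_of_le_succ fun m => cInfAux_mono_succ chi w m v

theorem cInfAux_le_cInfC (m : ℕ) (v : V) : cInfAux chi w m v ≤ cInfC chi w v :=
  le_iSup (fun m => cInfAux chi w m v) m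

/-- The fundamental recursion for `c_∞`. -/
theorem cInfC_rec (hdef : ∀ v : V, (∑' u : ↥(chi v), (w u.1)⁻¹) ≠ ⊤)
    {v : V} (hv : chi v ≠ ∅) :
    cInfC chi w v = (∑' u : ↥(chi v), (rInfC chi w u.1)⁻¹)⁻¹ := by
  have hshift : cInfC chi w v = ⨆ m : ℕ, cInfAux chi w (m + 1) v := by
    refine le_antisymm (iSup_le fun m => ?_) (iSup_le fun m => le_iSup (fun m => cInfAux chi w m v) (m + 1))
    exact (cInfAux_mono_succ chi w m v).trans (le_iSup (fun m => cInfAux chi w (m + 1) v) m)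
  rw [hshift]
  have heq : ∀ m : ℕ, cInfAux chi w (m + 1) v
      = (∑' u : ↥(chi v), (max (w u.1) (cInfAux chi w m u.1))⁻¹)⁻¹ := by
    intro m; simp only [cInfAux, if_neg hv]
  simp_rw [heq]
  rw [← ENNReal.inv_iInf]
  congr 1
  have hswap := tsum_iInf_antitone
      (f := fun m (u : ↥(chi v)) => (max (w u.1) (cInfAux chi w m u.1))⁻¹)
      (fun u a b hab => ENNReal.inv_le_inv.mpr (max_le_max le_rfl (cInfAux_mono chi w u.1 hab)))
      (by
        have : ∀ u : ↥(chi v), (max (w u.1) (cInfAux chi w 0 u.1))⁻¹ = (w u.1)⁻¹ := by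
          intro u; simp [cInfAux]
        simp_rw [this]; exact hdef v)
  rw [hswap]
  refine tsum_congr fun u => ?_
  rw [← ENNReal.inv_iSup]
  congr 1
  rw [rInfC]
  refine le_antisymm (iSup_le fun m => max_le_max le_rfl (cInfAux_le_cInfC chi w m u.1))
    (max_le ?_ ?_)
  · exact le_trans (le_max_left _ _) (le_iSup (fun m => max (w u.1) (cInfAux chi w m u.1)) 0)
  · rw [cInfC]; exact iSup_mono fun m => le_max_right _ _

end CInf

section Lower

variable {𝕜 : Type*} [RCLike 𝕜] {V : Type*} (par : V → Option V) (root : V) (μ : V → 𝕜)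

theorem nw_ne_zero (hμ : ∀ v : V, μ v ≠ 0) (v : V) : nw μ v ≠ 0 := by
  simp [nw, hμ v]

theorem nw_ne_top (v : V) : nw μ v ≠ ⊤ := ENNReal.coe_ne_top

theorem supNormOn_mono_set (w : V → ℝ≥0∞) {S T : Set V} (h : S ⊆ T) (g : V → 𝕜) :
    supNormOn w S g ≤ supNormOn w T g :=
  iSup_le fun x => le_iSup (fun y : ↥T => (‖g y.1‖₊ : ℝ≥0∞) * w y.1) ⟨x.1, h x.2⟩

theorem enorm_le_tsum_children (g : V → 𝕜) {v : V} (hv : children par v ≠ ∅)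
    (hg : BackwardInv (children par) g) :
    (‖g v‖₊ : ℝ≥0∞) ≤ ∑' u : ↥(children par v), (‖g u.1‖₊ : ℝ≥0∞) := by
  by_cases htop : (∑' u : ↥(children par v), (‖g u.1‖₊ : ℝ≥0∞)) = ⊤
  · rw [htop]; exact le_top
  · have hsnn : Summable fun u : ↥(children par v) => ‖g u.1‖₊ :=
      ENNReal.tsum_coe_ne_top_iff_summable.mp htop
    have hs : Summable fun u : ↥(children par v) => ‖g u.1‖ :=
      NNReal.summable_coe.mpr hsnn
    have h1 : ‖g v‖ ≤ ∑' u : ↥(children par v), ‖g u.1‖ := by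
      rw [← (hg v hv).tsum_eq]
      exact norm_tsum_le_tsum_norm hs
    calc (‖g v‖₊ : ℝ≥0∞) = ENNReal.ofReal ‖g v‖ := (ofReal_norm _).symm
    _ ≤ ENNReal.ofReal (∑' u : ↥(children par v), ‖g u.1‖) := ENNReal.ofReal_le_ofReal h1
    _ = ∑' u : ↥(children par v), (‖g u.1‖₊ : ℝ≥0∞) := by
        rw [ENNReal.ofReal_tsum_of_nonneg (fun u => norm_nonneg _) hs]
        exact tsum_congr fun u => ofReal_norm _

theorem lower_aux (hroot : IsRoot par root) (hμ : ∀ v : V, μ v ≠ 0)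
    (g : V → 𝕜) (hg : BackwardInv (children par) g) :
    ∀ (m : ℕ) (v : V), (‖g v‖₊ : ℝ≥0∞) * cInfAux (children par) (nw μ) m v
      ≤ supNormOn (nw μ) {x : V | x ≠ root} g := by
  intro m
  induction m with
  | zero => intro v; simp [cInfAux]
  | succ m ih =>
      intro v
      set S := supNormOn (nw μ) {x : V | x ≠ root} g with hS
      by_cases hSt : S = ⊤
      · rw [hSt]; exact le_top
      by_cases hleaf : children par v = ∅
      · simp [cInfAux, hleaf]
      have hkey : ∀ u : ↥(children par v),
          (‖g u.1‖₊ : ℝ≥0∞) ≤ S * (max (nw μ u.1) (cInfAux (children par) (nw μ) m u.1))⁻¹ := by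
        intro u
        set M := max (nw μ u.1) (cInfAux (children par) (nw μ) m u.1) with hM
        have h1 : (‖g u.1‖₊ : ℝ≥0∞) * nw μ u.1 ≤ S := by
          have hne : u.1 ≠ root := child_ne_root par root hroot u.2
          exact le_iSup (fun x : ↥{x : V | x ≠ root} => (‖g x.1‖₊ : ℝ≥0∞) * nw μ x.1) ⟨u.1, hne⟩
        have h3 : (‖g u.1‖₊ : ℝ≥0∞) * M ≤ S := by
          rcases max_cases (nw μ u.1) (cInfAux (children par) (nw μ) m u.1) with ⟨h, _⟩ | ⟨h, _⟩
          · rw [hM, h]; exact h1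
          · rw [hM, h]; exact ih u.1
        by_cases hMt : M = ⊤
        · have h0 : (‖g u.1‖₊ : ℝ≥0∞) = 0 := by
            by_contra hne
            rw [hMt, ENNReal.mul_top hne] at h3
            exact hSt (top_le_iff.mp h3)
          rw [h0]; exact zero_le
        · have hM0 : M ≠ 0 := by
            intro h0
            refine nw_ne_zero μ hμ u.1 (le_antisymm ?_ (zero_le))
            rw [← h0, hM]; exact le_max_left _ _
          calc (‖g u.1‖₊ : ℝ≥0∞)
              = (‖g u.1‖₊ : ℝ≥0∞) * (M * M⁻¹) := by
                rw [ENNReal.mul_inv_cancel hM0 hMt, mul_one]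
            _ = ((‖g u.1‖₊ : ℝ≥0∞) * M) * M⁻¹ := by rw [mul_assoc]
            _ ≤ S * M⁻¹ := mul_le_mul_left h3 _
      have hT : (‖g v‖₊ : ℝ≥0∞)
          ≤ S * ∑' u : ↥(children par v),
              (max (nw μ u.1) (cInfAux (children par) (nw μ) m u.1))⁻¹ :=
        (enorm_le_tsum_children par g hleaf hg).trans
          ((ENNReal.tsum_le_tsum hkey).trans_eq ENNReal.tsum_mul_left)
      set T := ∑' u : ↥(children par v),
          (max (nw μ u.1) (cInfAux (children par) (nw μ) m u.1))⁻¹ with hTdef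
      have hrw : cInfAux (children par) (nw μ) (m + 1) v = T⁻¹ := by
        simp only [cInfAux, if_neg hleaf, hTdef]
      rw [hrw]
      calc (‖g v‖₊ : ℝ≥0∞) * T⁻¹ ≤ (S * T) * T⁻¹ := mul_le_mul_left hT _
      _ = S * (T * T⁻¹) := mul_assoc _ _ _
      _ ≤ S * 1 := mul_le_mul_right (ENNReal.mul_inv_le_one T) _
      _ = S := mul_one S

theorem cInf_le_supNorm (hroot : IsRoot par root) (hμ : ∀ v : V, μ v ≠ 0)
    (g : V → 𝕜) (hg : BackwardInv (children par) g) (hg1 : g root = 1) :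
    cInfC (children par) (nw μ) root ≤ supNormOn (nw μ) {x : V | x ≠ root} g := by
  rw [cInfC]
  refine iSup_le fun m => ?_
  have h := lower_aux par root μ hroot hμ g hg m root
  rw [hg1] at h
  simpa using h

theorem rInf_le_supNorm (hroot : IsRoot par root) (hμ : ∀ v : V, μ v ≠ 0)
    (g : V → 𝕜) (hg : BackwardInv (children par) g) (hg1 : g root = 1) :
    rInfC (children par) (nw μ) root ≤ supNormOn (nw μ) Set.univ g := by
  rw [rInfC]
  refine max_le ?_ ?_
  · have h := le_iSup (fun x : ↥(Set.univ : Set V) => (‖g x.1‖₊ : ℝ≥0∞) * nw μ x.1)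
      ⟨root, trivial⟩
    simpa [hg1, supNormOn] using h
  · exact (cInf_le_supNorm par root μ hroot hμ g hg hg1).trans
      (supNormOn_mono_set (nw μ) (fun x hx => trivial) g)

end Lower

section Construction

variable {𝕜 : Type*} [RCLike 𝕜] {V : Type*} (par : V → Option V) (root : V) (μ : V → 𝕜)

/-- The denominator `D(p) = ∑_{u ∈ Chi(p)} r_∞(V(u))⁻¹`. -/
noncomputable def DD : V → ℝ≥0∞ :=
  fun p => ∑' u : ↥(children par p), (rInfC (children par) (nw μ) u.1)⁻¹

/-- The multiplier along an edge into `v`. -/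
noncomputable def lamD : V → ℝ≥0∞ :=
  fun v => (par v).elim 1 fun p => (rInfC (children par) (nw μ) v)⁻¹ / DD par μ p

/-- The candidate minimizer (as an extended nonnegative real). -/
noncomputable def FF : V → ℝ≥0∞ :=
  fun v => pathProd par (lamD par μ) (depthV par root v) v

/-- The candidate minimizer. -/
noncomputable def fF : V → 𝕜 := fun v => (((FF par root μ v).toReal : ℝ) : 𝕜)

theorem rInf_ne_zero (hμ : ∀ v : V, μ v ≠ 0) (v : V) :
    rInfC (children par) (nw μ) v ≠ 0 := by
  intro h
  refine nw_ne_zero μ hμ v (le_antisymm ?_ (zero_le))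
  rw [← h, rInfC]; exact le_max_left _ _

theorem rInf_inv_ne_top (hμ : ∀ v : V, μ v ≠ 0) (v : V) :
    (rInfC (children par) (nw μ) v)⁻¹ ≠ ⊤ :=
  ENNReal.inv_ne_top.mpr (rInf_ne_zero par μ hμ v)

theorem DD_ne_top (hdef : ∀ v : V, (∑' u : ↥(children par v), (nw μ u.1)⁻¹) ≠ ⊤) (p : V) :
    DD par μ p ≠ ⊤ := by
  refine ne_top_of_le_ne_top (hdef p) (ENNReal.tsum_le_tsum fun u => ?_)
  exact ENNReal.inv_le_inv.mpr (by rw [rInfC]; exact le_max_left _ _)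

theorem lamD_child {v p : V} (h : par v = some p) :
    lamD par μ v = (rInfC (children par) (nw μ) v)⁻¹ / DD par μ p := by
  simp [lamD, h]

theorem lamD_ne_top (hμ : ∀ v : V, μ v ≠ 0)
    (hdef : ∀ v : V, (∑' u : ↥(children par v), (nw μ u.1)⁻¹) ≠ ⊤) (v : V) :
    lamD par μ v ≠ ⊤ := by
  cases h : par v with
  | none => simp [lamD, h]
  | some p =>
      rw [lamD_child par μ h]
      by_cases hD : DD par μ p = 0
      · have h0 : (rInfC (children par) (nw μ) v)⁻¹ = 0 := by
          have := ENNReal.tsum_eq_zero.mp hD ⟨v, h⟩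
          exact this
        rw [h0, ENNReal.zero_div]
        exact ENNReal.zero_ne_top
      · simp only [ne_eq, ENNReal.div_eq_top, not_or, not_and_or]
        exact ⟨Or.inr hD, Or.inl (rInf_inv_ne_top par μ hμ v)⟩

theorem FF_root (hTree : IsDirectedTree par) (hroot : IsRoot par root) :
    FF par root μ root = 1 := by
  rw [FF, depthV_root par root hTree hroot]; rfl

theorem FF_child (hTree : IsDirectedTree par) (hroot : IsRoot par root) {v p : V}
    (h : par v = some p) :
    FF par root μ v = lamD par μ v * FF par root μ p := by
  rw [FF, depthV_child par root hTree hroot h]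
  show lamD par μ v * ((par v).elim 1 (pathProd par (lamD par μ) (depthV par root p)))
      = lamD par μ v * FF par root μ p
  rw [h]; rfl

theorem FF_ne_top (hTree : IsDirectedTree par) (hroot : IsRoot par root)
    (hμ : ∀ v : V, μ v ≠ 0)
    (hdef : ∀ v : V, (∑' u : ↥(children par v), (nw μ u.1)⁻¹) ≠ ⊤) (v : V) :
    FF par root μ v ≠ ⊤ := by
  refine depth_induction par root hTree hroot (fun v => FF par root μ v ≠ ⊤) ?_ ?_ v
  · show FF par root μ root ≠ ⊤
    rw [FF_root par root μ hTree hroot]; exact ENNReal.one_ne_top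
  · intro v p h ih
    rw [FF_child par root μ hTree hroot h]
    exact ENNReal.mul_ne_top (lamD_ne_top par μ hμ hdef v) ih

theorem children_ne_empty_of_mem {v p : V} (h : par v = some p) : children par p ≠ ∅ :=
  fun he => by rw [Set.eq_empty_iff_forall_notMem] at he; exact he v h

theorem cInf_parent (hdef : ∀ v : V, (∑' u : ↥(children par v), (nw μ u.1)⁻¹) ≠ ⊤)
    {v p : V} (h : par v = some p) :
    cInfC (children par) (nw μ) p = (DD par μ p)⁻¹ :=
  cInfC_rec (children par) (nw μ) hdef (children_ne_empty_of_mem par h)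

theorem rInf_parent_ne_top (hμ : ∀ v : V, μ v ≠ 0)
    (hdef : ∀ v : V, (∑' u : ↥(children par v), (nw μ u.1)⁻¹) ≠ ⊤)
    {v p : V} (h : par v = some p) (hv : rInfC (children par) (nw μ) v ≠ ⊤) :
    rInfC (children par) (nw μ) p ≠ ⊤ := by
  rw [rInfC, ← lt_top_iff_ne_top]
  refine max_lt (lt_top_iff_ne_top.mpr (nw_ne_top μ p)) ?_
  rw [cInf_parent par μ hdef h]
  refine ENNReal.inv_lt_top.mpr (lt_of_lt_of_le ?_ (ENNReal.le_tsum ⟨v, h⟩))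
  exact pos_iff_ne_zero.mpr (ENNReal.inv_ne_zero.mpr hv)

theorem FF_ne_zero (hTree : IsDirectedTree par) (hroot : IsRoot par root)
    (hμ : ∀ v : V, μ v ≠ 0)
    (hdef : ∀ v : V, (∑' u : ↥(children par v), (nw μ u.1)⁻¹) ≠ ⊤) (v : V) :
    rInfC (children par) (nw μ) v ≠ ⊤ → FF par root μ v ≠ 0 := by
  refine depth_induction par root hTree hroot
      (fun v => rInfC (children par) (nw μ) v ≠ ⊤ → FF par root μ v ≠ 0) ?_ ?_ v
  · intro _; rw [FF_root par root μ hTree hroot]; exact one_ne_zero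
  · intro v p h ih hv
    rw [FF_child par root μ hTree hroot h]
    refine mul_ne_zero ?_ (ih (rInf_parent_ne_top par μ hμ hdef h hv))
    rw [lamD_child par μ h]
    exact (ENNReal.div_pos (ENNReal.inv_ne_zero.mpr hv) (DD_ne_top par μ hdef p)).ne'

theorem FF_zero (hTree : IsDirectedTree par) (hroot : IsRoot par root) {v p : V}
    (h : par v = some p) (hv : rInfC (children par) (nw μ) v = ⊤) :
    FF par root μ v = 0 := by
  rw [FF_child par root μ hTree hroot h, lamD_child par μ h, hv]
  simp

theorem key_step (hTree : IsDirectedTree par) (hroot : IsRoot par root)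
    (hμ : ∀ v : V, μ v ≠ 0)
    (hdef : ∀ v : V, (∑' u : ↥(children par v), (nw μ u.1)⁻¹) ≠ ⊤)
    {v p : V} (h : par v = some p) :
    FF par root μ v * rInfC (children par) (nw μ) v
      ≤ FF par root μ p * cInfC (children par) (nw μ) p := by
  by_cases hv : rInfC (children par) (nw μ) v = ⊤
  · rw [FF_zero par root μ hTree hroot h hv, zero_mul]; exact zero_le
  · rw [FF_child par root μ hTree hroot h, lamD_child par μ h, cInf_parent par μ hdef h,
      div_eq_mul_inv]
    calc (rInfC (children par) (nw μ) v)⁻¹ * (DD par μ p)⁻¹ * FF par root μ p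
          * rInfC (children par) (nw μ) v
        = FF par root μ p * (DD par μ p)⁻¹
            * ((rInfC (children par) (nw μ) v)⁻¹ * rInfC (children par) (nw μ) v) := by ring
      _ = FF par root μ p * (DD par μ p)⁻¹ := by
          rw [ENNReal.inv_mul_cancel (rInf_ne_zero par μ hμ v) hv, mul_one]
      _ ≤ FF par root μ p * (DD par μ p)⁻¹ := le_rfl

theorem FF_bound (hTree : IsDirectedTree par) (hroot : IsRoot par root)
    (hμ : ∀ v : V, μ v ≠ 0)
    (hdef : ∀ v : V, (∑' u : ↥(children par v), (nw μ u.1)⁻¹) ≠ ⊤) (v : V) :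
    FF par root μ v * cInfC (children par) (nw μ) v ≤ cInfC (children par) (nw μ) root := by
  refine depth_induction par root hTree hroot
      (fun v => FF par root μ v * cInfC (children par) (nw μ) v
        ≤ cInfC (children par) (nw μ) root) ?_ ?_ v
  · show FF par root μ root * cInfC (children par) (nw μ) root ≤ cInfC (children par) (nw μ) root
    rw [FF_root par root μ hTree hroot, one_mul]
  · intro v p h ih
    calc FF par root μ v * cInfC (children par) (nw μ) v
        ≤ FF par root μ v * rInfC (children par) (nw μ) v :=
          mul_le_mul_right (le_max_right _ _) _
      _ ≤ FF par root μ p * cInfC (children par) (nw μ) p :=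
          key_step par root μ hTree hroot hμ hdef h
      _ ≤ cInfC (children par) (nw μ) root := ih

theorem FF_bound_ne_root (hTree : IsDirectedTree par) (hroot : IsRoot par root)
    (hμ : ∀ v : V, μ v ≠ 0)
    (hdef : ∀ v : V, (∑' u : ↥(children par v), (nw μ u.1)⁻¹) ≠ ⊤) {v : V} (hv : v ≠ root) :
    FF par root μ v * rInfC (children par) (nw μ) v ≤ cInfC (children par) (nw μ) root := by
  obtain ⟨p, hp⟩ := has_parent_of_ne_root par root hTree hroot hv
  exact (key_step par root μ hTree hroot hμ hdef hp).trans
    (FF_bound par root μ hTree hroot hμ hdef p)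

theorem enorm_fF (hTree : IsDirectedTree par) (hroot : IsRoot par root)
    (hμ : ∀ v : V, μ v ≠ 0)
    (hdef : ∀ v : V, (∑' u : ↥(children par v), (nw μ u.1)⁻¹) ≠ ⊤) (v : V) :
    ((‖(fF par root μ v : 𝕜)‖₊ : ℝ≥0∞)) = FF par root μ v := by
  rw [fF, ← enorm_eq_nnnorm, ← ofReal_norm, RCLike.norm_ofReal,
    abs_of_nonneg ENNReal.toReal_nonneg,
    ENNReal.ofReal_toReal (FF_ne_top par root μ hTree hroot hμ hdef v)]

end Construction

section Construction2

variable {𝕜 : Type*} [RCLike 𝕜] {V : Type*} (par : V → Option V) (root : V) (μ : V → 𝕜)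

theorem fF_backwardInv (hTree : IsDirectedTree par) (hroot : IsRoot par root)
    (hμ : ∀ v : V, μ v ≠ 0)
    (hdef : ∀ v : V, (∑' u : ↥(children par v), (nw μ u.1)⁻¹) ≠ ⊤)
    (hfin : rInfC (children par) (nw μ) root ≠ ⊤) :
    BackwardInv (children par) (fF par root μ : V → 𝕜) := by
  intro v hv
  by_cases hD : DD par μ v = 0
  · have hall : ∀ u : ↥(children par v), (fF par root μ u.1 : 𝕜) = 0 := by
      intro u
      have h0 : (rInfC (children par) (nw μ) u.1)⁻¹ = 0 := ENNReal.tsum_eq_zero.mp hD u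
      have hu : rInfC (children par) (nw μ) u.1 = ⊤ := ENNReal.inv_eq_zero.mp h0
      have hFF : FF par root μ u.1 = 0 := FF_zero par root μ hTree hroot u.2 hu
      rw [fF, hFF]; simp
    have hv0 : (fF par root μ v : 𝕜) = 0 := by
      have hcv : cInfC (children par) (nw μ) v = ⊤ := by
        rw [cInfC_rec (children par) (nw μ) hdef hv]
        show (DD par μ v)⁻¹ = ⊤
        rw [hD]; simp
      have hrv : rInfC (children par) (nw μ) v = ⊤ := by
        rw [rInfC, hcv]; simp
      have hvne : v ≠ root := fun h => hfin (h ▸ hrv)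
      obtain ⟨p, hp⟩ := has_parent_of_ne_root par root hTree hroot hvne
      have hFF : FF par root μ v = 0 := FF_zero par root μ hTree hroot hp hrv
      rw [fF, hFF]; simp
    have heq : (fun u : ↥(children par v) => (fF par root μ u.1 : 𝕜)) = fun _ => 0 :=
      funext hall
    rw [hv0, heq]
    exact hasSum_zero
  · have hDt : DD par μ v ≠ ⊤ := DD_ne_top par μ hdef v
    have hsum1 : ∑' u : ↥(children par v), lamD par μ u.1 = 1 := by
      have heach : ∀ u : ↥(children par v),
          lamD par μ u.1 = (rInfC (children par) (nw μ) u.1)⁻¹ * (DD par μ v)⁻¹ := fun u => by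
        rw [lamD_child par μ u.2, div_eq_mul_inv]
      calc ∑' u : ↥(children par v), lamD par μ u.1
          = ∑' u : ↥(children par v),
              (rInfC (children par) (nw μ) u.1)⁻¹ * (DD par μ v)⁻¹ := tsum_congr heach
        _ = DD par μ v * (DD par μ v)⁻¹ := by rw [ENNReal.tsum_mul_right]; rfl
        _ = 1 := ENNReal.mul_inv_cancel hD hDt
    have hsumR : HasSum (fun u : ↥(children par v) => (lamD par μ u.1).toReal) 1 := by
      have hs : Summable fun u : ↥(children par v) => (lamD par μ u.1).toReal :=
        ENNReal.summable_toReal (by rw [hsum1]; exact ENNReal.one_ne_top)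
      have ht : ∑' u : ↥(children par v), (lamD par μ u.1).toReal = 1 := by
        have h2 := ENNReal.tsum_toReal_eq
          (f := fun u : ↥(children par v) => lamD par μ u.1)
          (fun u => lamD_ne_top par μ hμ hdef u.1)
        rw [← h2, hsum1]
        exact ENNReal.toReal_one
      exact ht ▸ hs.hasSum
    have hsumK : HasSum (fun u : ↥(children par v) => (((lamD par μ u.1).toReal : ℝ) : 𝕜))
        (1 : 𝕜) := by
      have h := hsumR.mapL (RCLike.ofRealCLM (K := 𝕜))
      simpa using h
    have hmul := hsumK.mul_right (fF par root μ v : 𝕜)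
    rw [one_mul] at hmul
    have heq : (fun u : ↥(children par v) => (fF par root μ u.1 : 𝕜))
        = fun u : ↥(children par v) =>
            (((lamD par μ u.1).toReal : ℝ) : 𝕜) * fF par root μ v := by
      funext u
      rw [fF, fF, FF_child par root μ hTree hroot u.2, ENNReal.toReal_mul, RCLike.ofReal_mul]
    rw [heq]
    exact hmul

theorem fF_sup_ne_root (hTree : IsDirectedTree par) (hroot : IsRoot par root)
    (hμ : ∀ v : V, μ v ≠ 0)
    (hdef : ∀ v : V, (∑' u : ↥(children par v), (nw μ u.1)⁻¹) ≠ ⊤) :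
    supNormOn (nw μ) {x : V | x ≠ root} (fF par root μ : V → 𝕜)
      ≤ cInfC (children par) (nw μ) root := by
  refine iSup_le fun x => ?_
  calc (‖(fF par root μ x.1 : 𝕜)‖₊ : ℝ≥0∞) * nw μ x.1
      = FF par root μ x.1 * nw μ x.1 := by
        rw [enorm_fF par root μ hTree hroot hμ hdef]
    _ ≤ FF par root μ x.1 * rInfC (children par) (nw μ) x.1 :=
        mul_le_mul_right (le_max_left _ _) _
    _ ≤ cInfC (children par) (nw μ) root :=
        FF_bound_ne_root par root μ hTree hroot hμ hdef x.2

theorem fF_sup_univ (hTree : IsDirectedTree par) (hroot : IsRoot par root)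
    (hμ : ∀ v : V, μ v ≠ 0)
    (hdef : ∀ v : V, (∑' u : ↥(children par v), (nw μ u.1)⁻¹) ≠ ⊤) :
    supNormOn (nw μ) Set.univ (fF par root μ : V → 𝕜)
      ≤ rInfC (children par) (nw μ) root := by
  refine iSup_le fun x => ?_
  by_cases hx : x.1 = root
  · rw [hx, enorm_fF par root μ hTree hroot hμ hdef, FF_root par root μ hTree hroot, one_mul,
      rInfC]
    exact le_max_left _ _
  · calc (‖(fF par root μ x.1 : 𝕜)‖₊ : ℝ≥0∞) * nw μ x.1
        = FF par root μ x.1 * nw μ x.1 := by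
          rw [enorm_fF par root μ hTree hroot hμ hdef]
      _ ≤ FF par root μ x.1 * rInfC (children par) (nw μ) x.1 :=
          mul_le_mul_right (le_max_left _ _) _
      _ ≤ cInfC (children par) (nw μ) root :=
          FF_bound_ne_root par root μ hTree hroot hμ hdef hx
      _ ≤ rInfC (children par) (nw μ) root := le_max_right _ _

end Construction2

/-- Theorem 6.9 / `t-charinfinv`: the case `p = ∞` on an arbitrary rooted
tree, assuming the backward shift is defined on `ℓ^∞(V,μ)` (equivalently `c₀(V,μ)`): the
infima over backward invariant sequences equal `r_∞` resp. `c_∞`, and when finite they are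
attained; one minimizer is given by the explicit formula (in recursive form). -/
theorem statement9
    {𝕜 : Type*} [RCLike 𝕜] {V : Type*} (par : V → Option V) (hTree : IsDirectedTree par)
    (root : V) (hroot : IsRoot par root) (μ : V → 𝕜) (hμ : ∀ v : V, μ v ≠ 0)
    (hdef : ∀ v : V, (∑' u : ↥(children par v), (nw μ u.1)⁻¹) < ⊤) :
    -- (a)
    ((⨅ g ∈ {g : V → 𝕜 | BackwardInv (children par) g ∧ g root = 1},
        supNormOn (nw μ) Set.univ g) = rInfC (children par) (nw μ) root ∧
      (⨅ g ∈ {g : V → 𝕜 | BackwardInv (children par) g ∧ g root = 1},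
        supNormOn (nw μ) {v : V | v ≠ root} g) = cInfC (children par) (nw μ) root) ∧
    -- (b)
    (rInfC (children par) (nw μ) root < ⊤ →
      ∃ f : V → 𝕜,
        BackwardInv (children par) f ∧ f root = 1 ∧
        supNormOn (nw μ) Set.univ f = rInfC (children par) (nw μ) root ∧
        supNormOn (nw μ) {v : V | v ≠ root} f = cInfC (children par) (nw μ) root ∧
        (∀ v w : V, par v = some w →
          (rInfC (children par) (nw μ) v = ⊤ → f v = 0) ∧
          (rInfC (children par) (nw μ) v < ⊤ →
            f v = ((((rInfC (children par) (nw μ) v)⁻¹ /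
                  ∑' u : ↥(children par w),
                    (rInfC (children par) (nw μ) u.1)⁻¹).toReal : 𝕜)) * f w)) ∧
        ∀ v : V, rInfC (children par) (nw μ) v < ⊤ → ∃ r : ℝ, 0 < r ∧ f v = (r : 𝕜)) := by
  have hdef' : ∀ v : V, (∑' u : ↥(children par v), (nw μ u.1)⁻¹) ≠ ⊤ := fun v => (hdef v).ne
  have hlow1 : ∀ g ∈ {g : V → 𝕜 | BackwardInv (children par) g ∧ g root = 1},
      rInfC (children par) (nw μ) root ≤ supNormOn (nw μ) Set.univ g :=
    fun g hg => rInf_le_supNorm par root μ hroot hμ g hg.1 hg.2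
  have hlow2 : ∀ g ∈ {g : V → 𝕜 | BackwardInv (children par) g ∧ g root = 1},
      cInfC (children par) (nw μ) root ≤ supNormOn (nw μ) {x : V | x ≠ root} g :=
    fun g hg => cInf_le_supNorm par root μ hroot hμ g hg.1 hg.2
  by_cases hfin : rInfC (children par) (nw μ) root < ⊤
  · have hfin' := hfin.ne
    have hBI : BackwardInv (children par) (fF par root μ : V → 𝕜) :=
      fF_backwardInv par root μ hTree hroot hμ hdef' hfin'
    have hf1 : (fF par root μ root : 𝕜) = 1 := by
      rw [fF, FF_root par root μ hTree hroot]; simp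
    have hmem : (fF par root μ : V → 𝕜)
        ∈ {g : V → 𝕜 | BackwardInv (children par) g ∧ g root = 1} := ⟨hBI, hf1⟩
    have hsup1 : supNormOn (nw μ) Set.univ (fF par root μ : V → 𝕜)
        = rInfC (children par) (nw μ) root :=
      le_antisymm (fF_sup_univ par root μ hTree hroot hμ hdef')
        (rInf_le_supNorm par root μ hroot hμ _ hBI hf1)
    have hsup2 : supNormOn (nw μ) {v : V | v ≠ root} (fF par root μ : V → 𝕜)
        = cInfC (children par) (nw μ) root :=
      le_antisymm (fF_sup_ne_root par root μ hTree hroot hμ hdef')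
        (cInf_le_supNorm par root μ hroot hμ _ hBI hf1)
    refine ⟨⟨?_, ?_⟩, fun _ => ⟨fF par root μ, hBI, hf1, hsup1, hsup2, ?_, ?_⟩⟩
    · exact le_antisymm ((iInf₂_le _ hmem).trans hsup1.le) (le_iInf₂ hlow1)
    · exact le_antisymm ((iInf₂_le _ hmem).trans hsup2.le) (le_iInf₂ hlow2)
    · intro v w hvw
      constructor
      · intro htop
        rw [fF, FF_zero par root μ hTree hroot hvw htop]; simp
      · intro _
        rw [fF, fF, FF_child par root μ hTree hroot hvw, ENNReal.toReal_mul, RCLike.ofReal_mul,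
          lamD_child par μ hvw]
        rfl
    · intro v hv
      refine ⟨(FF par root μ v).toReal, ?_, rfl⟩
      exact ENNReal.toReal_pos (FF_ne_zero par root μ hTree hroot hμ hdef' v hv.ne)
        (FF_ne_top par root μ hTree hroot hμ hdef' v)
  · have hrtop : rInfC (children par) (nw μ) root = ⊤ := top_le_iff.mp (not_lt.mp hfin)
    have hctop : cInfC (children par) (nw μ) root = ⊤ := by
      have h := hrtop
      rw [rInfC] at h
      rcases max_eq_iff.mp h with ⟨h1, _⟩ | ⟨h1, _⟩
      · exact absurd h1 (nw_ne_top μ root)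
      · exact h1
    refine ⟨⟨?_, ?_⟩, fun h => absurd h hfin⟩
    · rw [hrtop]
      exact eq_top_iff.mpr (le_iInf₂ fun g hg => by rw [← hrtop]; exact hlow1 g hg)
    · rw [hctop]
      exact eq_top_iff.mpr (le_iInf₂ fun g hg => by rw [← hctop]; exact hlow2 g hg)
end PaperTree
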